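/- Let c > 0, 0 < γ < 1, δ ≥ 0, and let f : ℕ → ℝ be a nondecreasing function with f(t)/(t^γ·(log t)^δ) → 0 as t → ∞. Let T₀ ∈ ℕ with T₀ ≥ 1 and b > 1, with T₀·(b − 1) > 1 if δ > 0, and set T_i = ⌊T₀·b^i⌋ for i ≥ 0, T_{−1} = 0, and τ_i = T_i − T_{i−1}. Suppose r : ℕ → ℝ satisfies r(t) ≤ c·t^γ·(log t)^δ + f(t) for all t ≥ 1. Define the doubling-trick regret R^{DT}(T) = Σ_{i=0}^{I(T)} r(τ_i), where I(T) is the least index i with T_i ≥ T. Then there exists a nondecreasing function g : ℕ → ℝ with g(t)/(t^γ·(log t)^δ) → 0 as t → ∞ such that for all T ≥ 2, R^{DT}(T) ≤ l(γ, δ, T₀, b)·c·T^γ·(log T)^δ + g(T), where l(γ, δ, T₀, b) = (log(T₀·(b − 1) + 1)/log(T₀·(b − 1)))^δ · b^γ·(b − 1)^γ/(b^γ − 1). -/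

import Mathlib

open Filter

lemma aux_rpow_add_one_le {x γ : ℝ} (hx : 0 ≤ x) (h0 : 0 ≤ γ) (h1 : γ ≤ 1) :
    (x + 1) ^ γ ≤ x ^ γ + 1 := by
  have h := NNReal.rpow_add_le_add_rpow x.toNNReal 1 h0 h1
  have := NNReal.coe_le_coe.mpr h
  push_cast [NNReal.coe_rpow] at this
  rw [Real.coe_toNNReal x hx] at this
  simpa using this

lemma aux_log_ratio {a x : ℝ} (ha : 1 < a) (hx : a ≤ x) :
    Real.log (x + 1) ≤ Real.log (a + 1) / Real.log a * Real.log x := by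
  have hx1 : 1 < x := lt_of_lt_of_le ha hx
  have hx0 : 0 < x := by linarith
  have ha0 : 0 < a := by linarith
  have hla : 0 < Real.log a := Real.log_pos ha
  have hlx : 0 < Real.log x := Real.log_pos hx1
  have hlax : Real.log a ≤ Real.log x := Real.log_le_log ha0 hx
  have key : Real.log (1 + 1/x) * Real.log a ≤ Real.log (1 + 1/a) * Real.log x := by
    apply mul_le_mul
    · apply Real.log_le_log (by positivity)
      have : 1/x ≤ 1/a := one_div_le_one_div_of_le ha0 hx
      linarith
    · exact hlax
    · exact hla.le
    · apply Real.log_nonneg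
      have h1a : 0 < 1/a := by positivity
      linarith
  have hsplit : Real.log (x + 1) = Real.log x + Real.log (1 + 1/x) := by
    rw [← Real.log_mul (ne_of_gt hx0) (by positivity)]
    congr 1; field_simp
  have hsplit2 : Real.log (a + 1) = Real.log a + Real.log (1 + 1/a) := by
    rw [← Real.log_mul (ne_of_gt ha0) (by positivity)]
    congr 1; field_simp
  rw [hsplit, hsplit2, add_div, div_self (ne_of_gt hla), add_mul, one_mul]
  gcongr
  rw [div_mul_eq_mul_div, le_div_iff₀ hla]
  linarith [key]

lemma aux_running_sup {w E : ℕ → ℝ} (hw0 : ∀ t, 0 ≤ w t) (hw_mono : Monotone w)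
    (hw_top : Tendsto w atTop atTop)
    (hE : ∀ ε > 0, ∀ᶠ t in atTop, E t ≤ ε * w t) :
    ∃ g : ℕ → ℝ, Monotone g ∧ Tendsto (fun t => g t / w t) atTop (nhds 0) ∧
      ∀ t, E t ≤ g t := by
  set g : ℕ → ℝ := fun T =>
    (Finset.range (T + 1)).sup' (Finset.nonempty_range_iff.mpr (Nat.succ_ne_zero T))
      (fun s => max (E s) 0) with hg
  have hg_ge : ∀ T, E T ≤ g T := by
    intro T
    have h := Finset.le_sup' (fun s => max (E s) 0) (Finset.self_mem_range_succ T)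
    exact le_trans (le_max_left _ _) h
  have hg_nonneg : ∀ T, 0 ≤ g T := by
    intro T
    have h := Finset.le_sup' (fun s => max (E s) 0) (Finset.self_mem_range_succ T)
    exact le_trans (le_max_right (E T) 0) h
  have hg_mono : Monotone g := by
    intro s t hst
    exact Finset.sup'_mono _ (Finset.range_subset_range.mpr (by omega)) _
  refine ⟨g, hg_mono, ?_, hg_ge⟩
  rw [Metric.tendsto_atTop]
  intro ε hε
  obtain ⟨N₁, hN₁⟩ := (hE (ε/4) (by linarith)).exists_forall_of_atTop
  have hgT : ∀ T, N₁ ≤ T → g T ≤ g N₁ + ε/4 * w T := by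
    intro T hT
    apply Finset.sup'_le
    intro s hs
    rcases le_or_gt s N₁ with h | h
    · have h1 : max (E s) 0 ≤ g N₁ :=
        Finset.le_sup' (f := fun s => max (E s) 0) (Finset.mem_range_succ_iff.mpr h)
      have : 0 ≤ ε/4 * w T := mul_nonneg (by linarith) (hw0 T)
      linarith
    · have h1 : E s ≤ ε/4 * w s := hN₁ s h.le
      have h2 : w s ≤ w T := hw_mono (Finset.mem_range_succ_iff.mp hs)
      have h3 : 0 ≤ ε/4 * w T := mul_nonneg (by linarith) (hw0 T)
      have := hg_nonneg N₁
      have : max (E s) 0 ≤ ε/4 * w T := by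
        apply max_le _ h3
        calc E s ≤ ε/4 * w s := h1
        _ ≤ ε/4 * w T := by nlinarith
      linarith [hg_nonneg N₁]
  obtain ⟨N₂, hN₂⟩ := (hw_top.eventually_ge_atTop (max 1 (4 * g N₁ / ε))).exists_forall_of_atTop
  refine ⟨max N₁ N₂, fun T hT => ?_⟩
  have hT1 : N₁ ≤ T := le_trans (le_max_left _ _) hT
  have hT2 : N₂ ≤ T := le_trans (le_max_right _ _) hT
  have hwT : (1 : ℝ) ≤ w T := le_trans (le_max_left _ _) (hN₂ T hT2)
  have hwT0 : 0 < w T := by linarith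
  have hgN : 4 * g N₁ / ε ≤ w T := le_trans (le_max_right _ _) (hN₂ T hT2)
  have key : g T / w T ≤ ε/2 := by
    rw [div_le_iff₀ hwT0]
    have : g N₁ ≤ ε/4 * w T := by
      rw [div_le_iff₀ hε] at hgN
      nlinarith
    calc g T ≤ g N₁ + ε/4 * w T := hgT T hT1
    _ ≤ ε/4 * w T + ε/4 * w T := by linarith
    _ = ε/2 * w T := by ring
  have h0 : 0 ≤ g T / w T := div_nonneg (hg_nonneg T) hwT0.le
  rw [Real.dist_eq, sub_zero, abs_of_nonneg h0]
  linarith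

set_option maxHeartbeats 2000000 in
theorem doubling_trick_regret_bound
    (c γ δ : ℝ) (hc : 0 < c) (hγ0 : 0 < γ) (hγ1 : γ < 1) (hδ : 0 ≤ δ)
    (f : ℕ → ℝ) (hf_mono : Monotone f)
    (hf_small : Tendsto (fun t : ℕ => f t / ((t : ℝ) ^ γ * (Real.log t) ^ δ))
      atTop (nhds 0))
    (T₀ : ℕ) (hT₀ : 1 ≤ T₀) (b : ℝ) (hb : 1 < b)
    (hTb : 0 < δ → 1 < (T₀ : ℝ) * (b - 1))
    (Ti : ℕ → ℕ) (hTi : ∀ i, Ti i = Nat.floor ((T₀ : ℝ) * b ^ i))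
    (τ : ℕ → ℕ) (hτ0 : τ 0 = Ti 0) (hτ : ∀ i, 1 ≤ i → τ i = Ti i - Ti (i - 1))
    (r : ℕ → ℝ) (hr : ∀ t : ℕ, 1 ≤ t → r t ≤ c * (t : ℝ) ^ γ * (Real.log t) ^ δ + f t)
    (I : ℕ → ℕ) (hI : ∀ T, T ≤ Ti (I T) ∧ ∀ i < I T, Ti i < T)
    (RDT : ℕ → ℝ) (hRDT : ∀ T, RDT T = ∑ i ∈ Finset.range (I T + 1), r (τ i)) :
    ∃ g : ℕ → ℝ, Monotone g ∧
      Tendsto (fun t : ℕ => g t / ((t : ℝ) ^ γ * (Real.log t) ^ δ)) atTop (nhds 0) ∧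
      ∀ T : ℕ, 2 ≤ T →
        RDT T ≤ (Real.log ((T₀ : ℝ) * (b - 1) + 1) / Real.log ((T₀ : ℝ) * (b - 1))) ^ δ
            * (b ^ γ * (b - 1) ^ γ / (b ^ γ - 1))
            * c * (T : ℝ) ^ γ * (Real.log T) ^ δ + g T := by
  classical
  have hb0 : (0:ℝ) < b := lt_trans one_pos hb
  have hb1 : (0:ℝ) < b - 1 := by linarith
  have hT₀R : (1:ℝ) ≤ (T₀:ℝ) := by exact_mod_cast hT₀
  have hT₀pos : (0:ℝ) < (T₀:ℝ) := by linarith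
  set a : ℝ := (T₀:ℝ) * (b - 1) with ha_def
  have ha0 : 0 < a := mul_pos hT₀pos hb1
  set q : ℝ := b ^ γ with hq_def
  have hq1 : 1 < q := (Real.one_lt_rpow_iff hb0.le).mpr (Or.inl ⟨hb, hγ0⟩)
  have hq0 : 0 < q - 1 := by linarith
  set l₀ : ℝ := b ^ γ * (b - 1) ^ γ / (b ^ γ - 1) with hl₀_def
  have hl₀pos : 0 < l₀ :=
    div_pos (mul_pos (Real.rpow_pos_of_pos hb0 γ) (Real.rpow_pos_of_pos hb1 γ)) hq0
  set ρ : ℝ := Real.log (a + 1) / Real.log a with hρ_def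
  have hρδpos : 0 < ρ ^ δ := by
    rcases eq_or_lt_of_le hδ with h | h
    · rw [← h, Real.rpow_zero]; norm_num
    · have ha1 : 1 < a := hTb h
      have hρ0 : 0 < ρ := div_pos (Real.log_pos (by linarith)) (Real.log_pos ha1)
      exact Real.rpow_pos_of_pos hρ0 δ
  set P : ℝ := ρ ^ δ * l₀ with hP_def
  have hPpos : 0 < P := mul_pos hρδpos hl₀pos
  set w : ℕ → ℝ := fun t => (t:ℝ) ^ γ * Real.log t ^ δ with hw_def
  have hlog_nn : ∀ t : ℕ, 0 ≤ Real.log t := by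
    intro t
    rcases Nat.eq_zero_or_pos t with h | h
    · simp [h]
    · exact Real.log_nonneg (by exact_mod_cast h)
  have hw0 : ∀ t, 0 ≤ w t := fun t =>
    mul_nonneg (Real.rpow_nonneg (Nat.cast_nonneg t) _) (Real.rpow_nonneg (hlog_nn t) _)
  have hw_mono : Monotone w := by
    intro s t hst
    have h1 : ((s:ℝ)) ^ γ ≤ (t:ℝ) ^ γ :=
      Real.rpow_le_rpow (Nat.cast_nonneg s) (by exact_mod_cast hst) hγ0.le
    have hlst : Real.log s ≤ Real.log t := by
      rcases Nat.eq_zero_or_pos s with h | h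
      · simp [h, hlog_nn t]
      · exact Real.log_le_log (by exact_mod_cast h) (by exact_mod_cast hst)
    have h2 : Real.log s ^ δ ≤ Real.log t ^ δ := Real.rpow_le_rpow (hlog_nn s) hlst hδ
    exact mul_le_mul h1 h2 (Real.rpow_nonneg (hlog_nn s) _)
      (Real.rpow_nonneg (Nat.cast_nonneg t) _)
  have hlog_ge1 : ∀ t : ℕ, 3 ≤ t → (1:ℝ) ≤ Real.log t := by
    intro t ht
    rw [Real.le_log_iff_exp_le (by positivity)]
    have h1 := Real.exp_one_lt_d9
    have h3 : (3:ℝ) ≤ (t:ℝ) := by exact_mod_cast ht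
    linarith
  have hw_ge : ∀ t : ℕ, 3 ≤ t → (t:ℝ) ^ γ ≤ w t := by
    intro t ht
    have h1 : (1:ℝ) ≤ Real.log t ^ δ := by
      calc (1:ℝ) = 1 ^ δ := (Real.one_rpow δ).symm
        _ ≤ Real.log t ^ δ := Real.rpow_le_rpow zero_le_one (hlog_ge1 t ht) hδ
    calc (t:ℝ) ^ γ = (t:ℝ) ^ γ * 1 := (mul_one _).symm
      _ ≤ w t := mul_le_mul_of_nonneg_left h1 (Real.rpow_nonneg (Nat.cast_nonneg t) _)
  have hw_pos : ∀ t : ℕ, 3 ≤ t → 0 < w t := by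
    intro t ht
    have : (0:ℝ) < (t:ℝ) ^ γ := Real.rpow_pos_of_pos (by positivity) _
    exact lt_of_lt_of_le this (hw_ge t ht)
  have hw_top : Tendsto w atTop atTop := by
    apply tendsto_atTop_mono' atTop
    · filter_upwards [eventually_ge_atTop 3] with t ht
      exact hw_ge t ht
    · exact (tendsto_rpow_atTop hγ0).comp tendsto_natCast_atTop_atTop
  -- basic Ti / τ facts
  have hTi_mono : Monotone Ti := by
    intro i j h
    rw [hTi i, hTi j]
    apply Nat.floor_mono
    have : (b:ℝ) ^ i ≤ b ^ j := pow_le_pow_right₀ hb.le h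
    nlinarith
  have hTi_real_le : ∀ i, (Ti i : ℝ) ≤ (T₀:ℝ) * b ^ i := by
    intro i
    rw [hTi i]
    exact Nat.floor_le (by positivity)
  have hTi_real_gt : ∀ i, (T₀:ℝ) * b ^ i - 1 < (Ti i : ℝ) := by
    intro i
    rw [hTi i]
    have := Nat.lt_floor_add_one ((T₀:ℝ) * b ^ i)
    linarith
  have hτ_cast : ∀ k : ℕ, (τ (k+1) : ℝ) = (Ti (k+1) : ℝ) - Ti k := by
    intro k
    rw [hτ (k+1) (by omega)]
    simp only [Nat.add_sub_cancel]
    rw [Nat.cast_sub (hTi_mono (Nat.le_succ k))]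
  have habk : ∀ k : ℕ, a * b ^ k = (T₀:ℝ) * b ^ (k+1) - T₀ * b ^ k := by
    intro k
    rw [ha_def, pow_succ]
    ring
  have hτ_ub : ∀ k, (τ (k+1) : ℝ) ≤ a * b ^ k + 1 := by
    intro k
    rw [hτ_cast k, habk k]
    have h1 := hTi_real_le (k+1)
    have h2 := hTi_real_gt k
    linarith
  have hτ_lb : ∀ k, a * b ^ k - 1 ≤ (τ (k+1) : ℝ) := by
    intro k
    rw [hτ_cast k, habk k]
    have h1 := hTi_real_gt (k+1)
    have h2 := hTi_real_le k
    linarith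
  have hqpow : ∀ m : ℕ, ((b:ℝ) ^ m) ^ γ = q ^ m := by
    intro m
    rw [hq_def, ← Real.rpow_natCast b m, ← Real.rpow_natCast (b ^ γ) m,
      ← Real.rpow_mul hb0.le, ← Real.rpow_mul hb0.le, mul_comm]
  -- the key eventual bound
  have key : ∀ ε > 0, ∀ᶠ T : ℕ in atTop, RDT T - P * c * w T ≤ ε * w T := by
    intro ε hε
    set ε₂ : ℝ := ε / (2 * P + 1) with hε₂_def
    have hε₂ : 0 < ε₂ := div_pos hε (by linarith)
    have hfe : ∀ᶠ t : ℕ in atTop, f t ≤ ε₂ * w t := by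
      have h1 : ∀ᶠ t : ℕ in atTop, f t / ((t : ℝ) ^ γ * Real.log t ^ δ) < ε₂ :=
        (tendsto_order.mp hf_small).2 ε₂ hε₂
      filter_upwards [h1, eventually_ge_atTop 3] with t ht ht3
      have hwt : 0 < w t := hw_pos t ht3
      have h2 : f t / w t < ε₂ := ht
      rw [div_lt_iff₀ hwt] at h2
      exact h2.le
    obtain ⟨N₀', hN₀'⟩ := hfe.exists_forall_of_atTop
    set N₀ : ℕ := max N₀' 3 with hN₀_def
    have hab : Tendsto (fun k : ℕ => a * b ^ k) atTop atTop :=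
      (tendsto_pow_atTop_atTop_of_one_lt hb).const_mul_atTop ha0
    obtain ⟨k₀, hk₀⟩ := (hab.eventually_ge_atTop ((N₀:ℝ) + 1)).exists_forall_of_atTop
    set i₂ : ℕ := k₀ + 1 with hi₂_def
    have hτ_geN : ∀ i, i₂ ≤ i → (N₀:ℝ) ≤ (τ i : ℝ) := by
      intro i hi
      obtain ⟨k, rfl⟩ : ∃ k, i = k + 1 := ⟨i - 1, by omega⟩
      have h1 : k₀ ≤ k := by omega
      have h2 := hk₀ k h1
      have h3 := hτ_lb k
      linarith only [h2, h3]
    have hτ_geN' : ∀ i, i₂ ≤ i → N₀ ≤ τ i := by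
      intro i hi
      exact_mod_cast hτ_geN i hi
    have hτ_ge1 : ∀ i, i₂ ≤ i → 1 ≤ τ i := by
      intro i hi
      have := hτ_geN' i hi
      omega
    set C : ℝ := ∑ i ∈ Finset.range i₂, r (τ i) with hC_def
    set C₂ : ℝ := max (Real.log (b - 1)) 0 with hC₂_def
    have hC₂0 : 0 ≤ C₂ := le_max_right _ _
    set D : ℝ := a ^ γ + 2 with hD_def
    -- main deterministic bound
    have main : ∀ T : ℕ, 3 ≤ T → Ti (i₂ - 1) < T →
        RDT T ≤ C + (c + ε₂) * ρ ^ δ * (C₂ + Real.log T) ^ δ *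
          (l₀ * (T:ℝ) ^ γ + (Real.log T / Real.log b + D)) := by
      intro T hT3 hTbig
      set n := I T with hn_def
      have hin : i₂ ≤ n := by
        by_contra h
        push_neg at h
        have h1 : Ti n ≤ Ti (i₂ - 1) := hTi_mono (by omega)
        have h2 : T ≤ Ti n := (hI T).1
        omega
      have hn1 : 1 ≤ n := le_trans (by omega) hin
      have hTn : (T₀:ℝ) * b ^ (n - 1) < T := by
        have h2 : Ti (n - 1) < T := (hI T).2 (n - 1) (by omega)
        have h3 := hTi_real_gt (n - 1)
        have h4 : (Ti (n-1) : ℝ) + 1 ≤ T := by exact_mod_cast h2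
        linarith only [h3, h4]
      have hlogT1 : (1:ℝ) ≤ Real.log T := hlog_ge1 T hT3
      have hlogb : 0 < Real.log b := Real.log_pos hb
      have hTpos : (0:ℝ) < T := by positivity
      -- per-term bound
      have per : ∀ i ∈ Finset.Ico i₂ (n + 1),
          r (τ i) ≤ (c + ε₂) * ρ ^ δ * (C₂ + Real.log T) ^ δ * (τ i : ℝ) ^ γ := by
        intro i hi
        obtain ⟨hi1, hi2⟩ := Finset.mem_Ico.mp hi
        have h1 : 1 ≤ τ i := hτ_ge1 i hi1
        have hτ1 : (1:ℝ) ≤ (τ i : ℝ) := by exact_mod_cast h1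
        have hlogτ_nn : 0 ≤ Real.log (τ i) := Real.log_nonneg hτ1
        have hfτ : f (τ i) ≤ ε₂ * w (τ i) := by
          apply hN₀' (τ i)
          have := hτ_geN' i hi1
          omega
        have hrτ := hr (τ i) h1
        have hstep1 : r (τ i) ≤ (c + ε₂) * ((τ i : ℝ) ^ γ * Real.log (τ i) ^ δ) := by
          have hw' : w (τ i) = (τ i : ℝ) ^ γ * Real.log (τ i) ^ δ := rfl
          rw [hw'] at hfτ
          have e3 : c * (τ i : ℝ) ^ γ * Real.log (τ i) ^ δ
              = c * ((τ i : ℝ) ^ γ * Real.log (τ i) ^ δ) := by ring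
          have e4 : (c + ε₂) * ((τ i : ℝ) ^ γ * Real.log (τ i) ^ δ)
              = c * ((τ i : ℝ) ^ γ * Real.log (τ i) ^ δ)
                + ε₂ * ((τ i : ℝ) ^ γ * Real.log (τ i) ^ δ) := by ring
          linarith only [hrτ, hfτ, e3, e4]
        have hlog4 : Real.log (τ i) ^ δ ≤ ρ ^ δ * (C₂ + Real.log T) ^ δ := by
          rcases eq_or_lt_of_le hδ with hδ0 | hδpos
          · rw [← hδ0]
            simp [Real.rpow_zero]
          · have ha1 : 1 < a := hTb hδpos
            have hρ0 : 0 < ρ := div_pos (Real.log_pos (by linarith)) (Real.log_pos ha1)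
            obtain ⟨k, rfl⟩ : ∃ k, i = k + 1 := ⟨i - 1, by omega⟩
            have habk1 : a ≤ a * b ^ k :=
              le_mul_of_one_le_right ha0.le (one_le_pow₀ hb.le)
            have h5 : Real.log (τ (k+1)) ≤ Real.log (a * b ^ k + 1) :=
              Real.log_le_log (by linarith) (hτ_ub k)
            have h6 : Real.log (a * b ^ k + 1) ≤ ρ * Real.log (a * b ^ k) := by
              rw [hρ_def]
              exact aux_log_ratio ha1 habk1
            have h7 : Real.log (a * b ^ k) ≤ C₂ + Real.log T := by
              have hkn : k ≤ n - 1 := by omega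
              have hbk : (b:ℝ) ^ k ≤ b ^ (n - 1) := pow_le_pow_right₀ hb.le hkn
              have h9 : (T₀:ℝ) * b ^ k ≤ T₀ * b ^ (n - 1) := by nlinarith
              have h10 : (T₀:ℝ) * b ^ k < T := lt_of_le_of_lt h9 hTn
              have h8 : a * b ^ k ≤ (b - 1) * T := by
                have : a * b ^ k = (b - 1) * ((T₀:ℝ) * b ^ k) := by rw [ha_def]; ring
                rw [this]
                nlinarith
              calc Real.log (a * b ^ k) ≤ Real.log ((b - 1) * T) := by
                    apply Real.log_le_log _ h8
                    positivity
                _ = Real.log (b - 1) + Real.log T :=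
                    Real.log_mul (ne_of_gt hb1) (ne_of_gt hTpos)
                _ ≤ C₂ + Real.log T := by
                    have := le_max_left (Real.log (b - 1)) (0:ℝ)
                    rw [hC₂_def]
                    linarith
            have h11 : Real.log (τ (k+1)) ≤ ρ * (C₂ + Real.log T) :=
              le_trans h5 (le_trans h6 (mul_le_mul_of_nonneg_left h7 hρ0.le))
            calc Real.log (τ (k+1)) ^ δ ≤ (ρ * (C₂ + Real.log T)) ^ δ :=
                Real.rpow_le_rpow hlogτ_nn h11 hδ
              _ = ρ ^ δ * (C₂ + Real.log T) ^ δ :=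
                Real.mul_rpow hρ0.le (by linarith)
        calc r (τ i) ≤ (c + ε₂) * ((τ i : ℝ) ^ γ * Real.log (τ i) ^ δ) := hstep1
          _ ≤ (c + ε₂) * ((τ i : ℝ) ^ γ * (ρ ^ δ * (C₂ + Real.log T) ^ δ)) := by
              apply mul_le_mul_of_nonneg_left _ (by linarith)
              exact mul_le_mul_of_nonneg_left hlog4
                (Real.rpow_nonneg (Nat.cast_nonneg (τ i)) γ)
          _ = (c + ε₂) * ρ ^ δ * (C₂ + Real.log T) ^ δ * (τ i : ℝ) ^ γ := by ring
      -- sum the per-term bounds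
      set K : ℝ := (c + ε₂) * ρ ^ δ * (C₂ + Real.log T) ^ δ with hK_def
      have hKnn : 0 ≤ K := by
        rw [hK_def]
        apply mul_nonneg (mul_nonneg (by linarith) hρδpos.le)
        exact Real.rpow_nonneg (by linarith) _
      have hsplit : RDT T = C + ∑ i ∈ Finset.Ico i₂ (n + 1), r (τ i) := by
        rw [hRDT T, hC_def, ← Finset.sum_range_add_sum_Ico _ (show i₂ ≤ n + 1 by omega)]
      have hsum1 : ∑ i ∈ Finset.Ico i₂ (n + 1), r (τ i) ≤
          K * ∑ i ∈ Finset.Ico i₂ (n + 1), (τ i : ℝ) ^ γ := by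
        rw [Finset.mul_sum]
        exact Finset.sum_le_sum per
      have hτγ_ub : ∀ i ∈ Finset.Ico i₂ (n + 1), (τ i : ℝ) ^ γ ≤ a ^ γ * q ^ (i - 1) + 1 := by
        intro i hi
        obtain ⟨hi1, hi2⟩ := Finset.mem_Ico.mp hi
        obtain ⟨k, rfl⟩ : ∃ k, i = k + 1 := ⟨i - 1, by omega⟩
        simp only [Nat.add_sub_cancel]
        have h1 : ((τ (k+1) : ℝ)) ^ γ ≤ (a * b ^ k + 1) ^ γ :=
          Real.rpow_le_rpow (Nat.cast_nonneg _) (hτ_ub k) hγ0.le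
        have h2 : (a * b ^ k + 1) ^ γ ≤ (a * b ^ k) ^ γ + 1 :=
          aux_rpow_add_one_le (by positivity) hγ0.le hγ1.le
        have h3 : (a * b ^ k) ^ γ = a ^ γ * q ^ k := by
          rw [Real.mul_rpow ha0.le (by positivity), hqpow k]
        linarith
      have hq0' : (0:ℝ) < q := by linarith
      have s1 : ∑ i ∈ Finset.Ico i₂ (n + 1), (τ i : ℝ) ^ γ ≤
          ∑ i ∈ Finset.Ico i₂ (n + 1), (a ^ γ * q ^ (i - 1) + 1) :=
        Finset.sum_le_sum hτγ_ub
      have s2 : ∑ i ∈ Finset.Ico i₂ (n + 1), (a ^ γ * q ^ (i - 1) + 1) ≤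
          ∑ i ∈ Finset.range (n + 1), (a ^ γ * q ^ (i - 1) + 1) := by
        apply Finset.sum_le_sum_of_subset_of_nonneg
        · rw [Finset.range_eq_Ico]
          exact Finset.Ico_subset_Ico (Nat.zero_le _) le_rfl
        · intro i _ _
          have h4 : (0:ℝ) < q ^ (i-1) := pow_pos hq0' _
          have h5 : (0:ℝ) < a ^ γ := Real.rpow_pos_of_pos ha0 γ
          have h6 := mul_pos h5 h4
          linarith only [h6]
      have s3 : ∑ i ∈ Finset.range (n + 1), (a ^ γ * q ^ (i - 1) + 1)
          = a ^ γ * (∑ i ∈ Finset.range n, q ^ i + 1) + ((n:ℝ) + 1) := by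
        rw [Finset.sum_add_distrib, Finset.sum_const, Finset.card_range, ← Finset.mul_sum,
          Finset.sum_range_succ' (fun i => q ^ (i - 1)) n]
        simp only [Nat.add_sub_cancel, Nat.zero_sub, pow_zero, nsmul_eq_mul, mul_one]
        push_cast
        ring
      have s4 : ∑ i ∈ Finset.range n, q ^ i = (q ^ n - 1) / (q - 1) :=
        geom_sum_eq (ne_of_gt hq1) n
      have hl₀q : l₀ = (b - 1) ^ γ * q / (q - 1) := by
        rw [hl₀_def, hq_def]
        ring
      have s5 : q ^ n ≤ (T:ℝ) ^ γ * q / (T₀:ℝ) ^ γ := by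
        have h1 : (b:ℝ) ^ (n - 1) * T₀ ≤ T := by
          rw [mul_comm]; exact hTn.le
        have h1' : (b:ℝ) ^ (n - 1) ≤ (T:ℝ) / T₀ := (le_div_iff₀ hT₀pos).mpr h1
        have h2 : (b:ℝ) ^ n = b ^ (n - 1) * b := by
          rw [← pow_succ]
          congr 1
          omega
        have h3 : (b:ℝ) ^ n ≤ (T:ℝ) / T₀ * b := by
          rw [h2]
          exact mul_le_mul_of_nonneg_right h1' hb0.le
        have h4 : q ^ n = ((b:ℝ) ^ n) ^ γ := (hqpow n).symm
        rw [h4]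
        calc ((b:ℝ) ^ n) ^ γ ≤ ((T:ℝ) / T₀ * b) ^ γ :=
            Real.rpow_le_rpow (by positivity) h3 hγ0.le
          _ = (T:ℝ) ^ γ * q / (T₀:ℝ) ^ γ := by
            rw [Real.mul_rpow (by positivity) hb0.le,
              Real.div_rpow (Nat.cast_nonneg T) hT₀pos.le, hq_def]
            ring
      have s6 : a ^ γ = (T₀:ℝ) ^ γ * (b - 1) ^ γ := by
        rw [ha_def, Real.mul_rpow hT₀pos.le hb1.le]
      have haγ : (0:ℝ) < a ^ γ := Real.rpow_pos_of_pos ha0 γ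
      have hT₀γ : (0:ℝ) < (T₀:ℝ) ^ γ := Real.rpow_pos_of_pos hT₀pos γ
      have hbγ1 : (0:ℝ) < (b - 1) ^ γ := Real.rpow_pos_of_pos hb1 γ
      have key1 : a ^ γ * (q ^ n / (q - 1)) ≤ l₀ * (T:ℝ) ^ γ := by
        have hpos : (0:ℝ) < (T₀:ℝ) ^ γ * (b - 1) ^ γ / (q - 1) :=
          div_pos (mul_pos hT₀γ hbγ1) hq0
        have hmul := mul_le_mul_of_nonneg_left s5 hpos.le
        calc a ^ γ * (q ^ n / (q - 1))
            = (T₀:ℝ) ^ γ * (b - 1) ^ γ / (q - 1) * q ^ n := by rw [s6]; ring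
          _ ≤ (T₀:ℝ) ^ γ * (b - 1) ^ γ / (q - 1) * ((T:ℝ) ^ γ * q / (T₀:ℝ) ^ γ) := hmul
          _ = l₀ * (T:ℝ) ^ γ := by
            rw [hl₀q]
            field_simp
      have s7 : a ^ γ * ((q ^ n - 1) / (q - 1) + 1) ≤ l₀ * (T:ℝ) ^ γ + a ^ γ := by
        have h9 : (q ^ n - 1) / (q - 1) ≤ q ^ n / (q - 1) :=
          (div_le_div_iff_of_pos_right hq0).mpr (sub_le_self _ zero_le_one)
        have h10 : a ^ γ * ((q ^ n - 1) / (q - 1)) ≤ a ^ γ * (q ^ n / (q - 1)) :=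
          mul_le_mul_of_nonneg_left h9 haγ.le
        have h11 : a ^ γ * ((q ^ n - 1) / (q - 1) + 1)
            = a ^ γ * ((q ^ n - 1) / (q - 1)) + a ^ γ := by ring
        linarith only [h10, h11, key1]
      have s8 : ((n:ℝ) + 1) ≤ Real.log T / Real.log b + 2 := by
        have h1 : ((n - 1 : ℕ) : ℝ) * Real.log b < Real.log T := by
          rw [← Real.log_pow]
          apply Real.log_lt_log (pow_pos hb0 _)
          have h2 : (b:ℝ) ^ (n-1) ≤ (T₀:ℝ) * b ^ (n-1) :=
            le_mul_of_one_le_left (by positivity) hT₀R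
          linarith only [h2, hTn]
        have h2 : ((n - 1 : ℕ) : ℝ) < Real.log T / Real.log b := (lt_div_iff₀ hlogb).mpr h1
        have h3 : ((n:ℝ)) = ((n - 1 : ℕ) : ℝ) + 1 := by
          rw [Nat.cast_sub hn1]
          ring
        linarith only [h2, h3]
      have hsum2 : ∑ i ∈ Finset.Ico i₂ (n + 1), (τ i : ℝ) ^ γ ≤
          l₀ * (T:ℝ) ^ γ + (Real.log T / Real.log b + D) := by
        calc ∑ i ∈ Finset.Ico i₂ (n + 1), (τ i : ℝ) ^ γ
            ≤ ∑ i ∈ Finset.range (n + 1), (a ^ γ * q ^ (i - 1) + 1) := le_trans s1 s2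
          _ = a ^ γ * ((q ^ n - 1) / (q - 1) + 1) + ((n:ℝ) + 1) := by rw [s3, s4]
          _ ≤ (l₀ * (T:ℝ) ^ γ + a ^ γ) + (Real.log T / Real.log b + 2) := add_le_add s7 s8
          _ = l₀ * (T:ℝ) ^ γ + (Real.log T / Real.log b + D) := by rw [hD_def]; ring
      rw [hsplit]
      have hfinal : ∑ i ∈ Finset.Ico i₂ (n + 1), r (τ i) ≤
          K * (l₀ * (T:ℝ) ^ γ + (Real.log T / Real.log b + D)) :=
        le_trans hsum1 (mul_le_mul_of_nonneg_left hsum2 hKnn)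
      linarith only [hfinal]
    -- asymptotic comparison
    have tlog : Tendsto (fun T : ℕ => Real.log T) atTop atTop :=
      Real.tendsto_log_atTop.comp tendsto_natCast_atTop_atTop
    have t1 : Tendsto (fun T : ℕ => C / w T) atTop (nhds 0) :=
      tendsto_const_nhds.div_atTop hw_top
    have t2a : Tendsto (fun T : ℕ => (C₂ + Real.log T) / Real.log T) atTop (nhds 1) := by
      have h0 : Tendsto (fun T : ℕ => C₂ / Real.log T + 1) atTop (nhds (0 + 1)) :=
        (tendsto_const_nhds.div_atTop tlog).add tendsto_const_nhds
      rw [show (0:ℝ) + 1 = 1 by ring] at h0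
      refine Tendsto.congr' ?_ h0
      filter_upwards [eventually_ge_atTop 3] with T hT
      have h1 : (1:ℝ) ≤ Real.log T := hlog_ge1 T hT
      have h2 : Real.log T ≠ 0 := by linarith
      field_simp
    have t2 : Tendsto (fun T : ℕ => (C₂ + Real.log T) ^ δ / Real.log T ^ δ)
        atTop (nhds 1) := by
      have h := t2a.rpow_const (p := δ) (Or.inl one_ne_zero)
      rw [Real.one_rpow] at h
      refine Tendsto.congr' ?_ h
      filter_upwards [eventually_ge_atTop 3] with T hT
      have h1 : (1:ℝ) ≤ Real.log T := hlog_ge1 T hT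
      exact Real.div_rpow (x := C₂ + Real.log T) (y := Real.log T) (by linarith) (by linarith) δ
    have t3a : Tendsto (fun T : ℕ => (Real.log T / Real.log b + D) / (T:ℝ) ^ γ)
        atTop (nhds 0) := by
      have h1 : Tendsto (fun T : ℕ => Real.log T / (T:ℝ) ^ γ) atTop (nhds 0) :=
        (isLittleO_log_rpow_atTop hγ0).tendsto_div_nhds_zero.comp
          tendsto_natCast_atTop_atTop
      have h2 : Tendsto (fun T : ℕ => D / (T:ℝ) ^ γ) atTop (nhds 0) :=
        tendsto_const_nhds.div_atTop ((tendsto_rpow_atTop hγ0).comp tendsto_natCast_atTop_atTop)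
      have h3 := (h1.const_mul (1 / Real.log b)).add h2
      rw [show 1 / Real.log b * 0 + 0 = 0 by ring] at h3
      refine Tendsto.congr' ?_ h3
      filter_upwards [eventually_ge_atTop 1] with T hT
      have h4 : ((T:ℝ)) ^ γ ≠ 0 := by
        have : (0:ℝ) < (T:ℝ) := by exact_mod_cast hT
        exact ne_of_gt (Real.rpow_pos_of_pos this γ)
      field_simp
    have t3 : Tendsto (fun T : ℕ =>
        (C₂ + Real.log T) ^ δ * (Real.log T / Real.log b + D) / w T) atTop (nhds 0) := by
      have h := t2.mul t3a
      rw [show (1:ℝ) * 0 = 0 by ring] at h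
      refine Tendsto.congr' ?_ h
      filter_upwards [eventually_ge_atTop 3] with T hT
      have h1 : (1:ℝ) ≤ Real.log T := hlog_ge1 T hT
      have h2 : Real.log T ^ δ ≠ 0 := ne_of_gt (Real.rpow_pos_of_pos (by linarith) δ)
      have h3 : ((T:ℝ)) ^ γ ≠ 0 := by
        have h5 : (0:ℝ) < (T:ℝ) := by
          have : (3:ℝ) ≤ (T:ℝ) := by exact_mod_cast hT
          linarith
        exact ne_of_gt (Real.rpow_pos_of_pos h5 γ)
      have h4 : w T = (T:ℝ) ^ γ * Real.log T ^ δ := rfl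
      rw [h4]
      field_simp
    have tφ : Tendsto (fun T : ℕ => C / w T
          + (c + ε₂) * ρ ^ δ * l₀ * ((C₂ + Real.log T) ^ δ / Real.log T ^ δ)
          + (c + ε₂) * ρ ^ δ *
            ((C₂ + Real.log T) ^ δ * (Real.log T / Real.log b + D) / w T))
        atTop (nhds (0 + (c + ε₂) * ρ ^ δ * l₀ * 1 + (c + ε₂) * ρ ^ δ * 0)) :=
      (t1.add (t2.const_mul _)).add (t3.const_mul _)
    have hval : (0:ℝ) + (c + ε₂) * ρ ^ δ * l₀ * 1 + (c + ε₂) * ρ ^ δ * 0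
        = P * c + ε₂ * P := by
      rw [hP_def]
      ring
    rw [hval] at tφ
    have hlt : P * c + ε₂ * P < P * c + ε := by
      have e2 : ε₂ * P < ε := by
        rw [hε₂_def, div_mul_eq_mul_div, div_lt_iff₀ (show (0:ℝ) < 2 * P + 1 by
          linarith only [hPpos])]
        exact mul_lt_mul_of_pos_left (by linarith only [hPpos]) hε
      linarith only [e2]
    have hev := tφ.eventually_lt_const hlt
    filter_upwards [hev, eventually_ge_atTop (max (Ti (i₂ - 1) + 1) 3)] with T hφT hTge
    have hT3 : 3 ≤ T := le_trans (le_max_right _ _) hTge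
    have hTbig : Ti (i₂ - 1) < T := by
      have := le_trans (le_max_left _ _) hTge
      omega
    have h1 := main T hT3 hTbig
    have hwT : 0 < w T := hw_pos T hT3
    have hlogT1 : (1:ℝ) ≤ Real.log T := hlog_ge1 T hT3
    have hlogδ : (0:ℝ) < Real.log T ^ δ := Real.rpow_pos_of_pos (by linarith) δ
    have hTγ : (0:ℝ) < (T:ℝ) ^ γ := by
      have h5 : (0:ℝ) < (T:ℝ) := by
        have : (3:ℝ) ≤ (T:ℝ) := by exact_mod_cast hT3
        linarith
      exact Real.rpow_pos_of_pos h5 γ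
    have h2 : C + (c + ε₂) * ρ ^ δ * (C₂ + Real.log T) ^ δ *
        (l₀ * (T:ℝ) ^ γ + (Real.log T / Real.log b + D))
        = (C / w T
          + (c + ε₂) * ρ ^ δ * l₀ * ((C₂ + Real.log T) ^ δ / Real.log T ^ δ)
          + (c + ε₂) * ρ ^ δ *
            ((C₂ + Real.log T) ^ δ * (Real.log T / Real.log b + D) / w T)) * w T := by
      have h4 : w T = (T:ℝ) ^ γ * Real.log T ^ δ := rfl
      rw [h4]
      field_simp
      ring
    have h6 : (C / w T
          + (c + ε₂) * ρ ^ δ * l₀ * ((C₂ + Real.log T) ^ δ / Real.log T ^ δ)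
          + (c + ε₂) * ρ ^ δ *
            ((C₂ + Real.log T) ^ δ * (Real.log T / Real.log b + D) / w T)) * w T
        ≤ (P * c + ε) * w T := mul_le_mul_of_nonneg_right hφT.le (hw0 T)
    have h7 : (P * c + ε) * w T = P * c * w T + ε * w T := by ring
    linarith only [h1, h2, h6, h7]

  -- final assembly
  obtain ⟨g, hg_mono, hg_tendsto, hg_ge⟩ := aux_running_sup hw0 hw_mono hw_top key
  refine ⟨g, hg_mono, hg_tendsto, ?_⟩
  intro T hT
  have h1 := hg_ge T
  have h2 : P * c * w T = P * c * (T:ℝ) ^ γ * Real.log T ^ δ := by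
    rw [hw_def]; ring
  linarith [h1, h2.le, h2.ge]
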